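/- Let f : ℝ^m × ℝ^n → ℝ be twice continuously differentiable, let y* : ℝ^m → ℝ^n be differentiable at x₀ with ∇_y f(x, y*(x)) = 0 for all x in a neighborhood of x₀, let H (the partial Hessian ∂²f/∂y∂y' at (x₀, y*(x₀))) be invertible, and let C be the mixed second derivative ∂²f/∂y∂x' at (x₀, y*(x₀)). Let F : ℝ^m × ℝ^n → ℝ be differentiable and define φ(x) := F(x, y*(x)). Then the gradient of φ at x₀ satisfies ∇φ(x₀) = ∇_x F(x₀, y*(x₀)) − Cᵀ H⁻¹ ∇_y F(x₀, y*(x₀)), where Cᵀ denotes the adjoint (transpose) of the linear map C : ℝ^m → ℝ^n. -/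

import Mathlib

open Filter Topology

private abbrev Esp (k : ℕ) := EuclideanSpace ℝ (Fin k)

set_option maxHeartbeats 2000000 in
open ContinuousLinearMap InnerProductSpace in
/-- Hyper-gradient formula via implicit differentiation: with `φ(x) := F(x, y*(x))`,
`∇φ(x₀) = ∇_x F(x₀, y*(x₀)) − Cᵀ H⁻¹ ∇_y F(x₀, y*(x₀))`, where `H` is the (invertible)
partial Hessian of `f` in `y`, `C` the mixed second derivative `∂²f/∂y∂x'`, and `Cᵀ`
the adjoint of `C`. -/
theorem statement10 {m n : ℕ}
    (f : EuclideanSpace ℝ (Fin m) × EuclideanSpace ℝ (Fin n) → ℝ)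
    (hf : ContDiff ℝ 2 f)
    (ystar : EuclideanSpace ℝ (Fin m) → EuclideanSpace ℝ (Fin n))
    (x₀ : EuclideanSpace ℝ (Fin m))
    (hdiff : DifferentiableAt ℝ ystar x₀)
    -- first-order optimality of y*(x) for the lower-level problem, near x₀
    (hcrit : ∀ᶠ x in 𝓝 x₀, gradient (fun y => f (x, y)) (ystar x) = 0)
    -- H : partial Hessian ∂²f/∂y∂y' at (x₀, y*(x₀)), as a linear map ℝⁿ → ℝⁿ
    (H : EuclideanSpace ℝ (Fin n) →L[ℝ] EuclideanSpace ℝ (Fin n))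
    (hH : H = fderiv ℝ (fun y => gradient (fun y' => f (x₀, y')) y) (ystar x₀))
    -- C : mixed second derivative ∂²f/∂y∂x' at (x₀, y*(x₀)), as a linear map ℝᵐ → ℝⁿ
    (C : EuclideanSpace ℝ (Fin m) →L[ℝ] EuclideanSpace ℝ (Fin n))
    (hC : C = fderiv ℝ (fun x => gradient (fun y => f (x, y)) (ystar x₀)) x₀)
    -- H is invertible with inverse Hinv
    (Hinv : EuclideanSpace ℝ (Fin n) →L[ℝ] EuclideanSpace ℝ (Fin n))
    (hHinv₁ : Hinv.comp H = ContinuousLinearMap.id ℝ (EuclideanSpace ℝ (Fin n)))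
    (hHinv₂ : H.comp Hinv = ContinuousLinearMap.id ℝ (EuclideanSpace ℝ (Fin n)))
    (F : EuclideanSpace ℝ (Fin m) × EuclideanSpace ℝ (Fin n) → ℝ)
    (hF : Differentiable ℝ F) :
    gradient (fun x => F (x, ystar x)) x₀ =
      gradient (fun x => F (x, ystar x₀)) x₀ -
        (ContinuousLinearMap.adjoint C)
          (Hinv (gradient (fun y => F (x₀, y)) (ystar x₀))) := by
  set y₀ := ystar x₀ with hy₀
  have hfd : Differentiable ℝ f := hf.differentiable (by norm_num)
  -- the precomposition-with-inr map
  set J : (((Esp m) × (Esp n)) →L[ℝ] ℝ) →L[ℝ] ((Esp n) →L[ℝ] ℝ) :=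
    (ContinuousLinearMap.compL ℝ (Esp n) ((Esp m) × (Esp n)) ℝ).flip (inr ℝ (Esp m) (Esp n)) with hJ
  -- `G` is the partial-gradient-in-`y` map, jointly in `(x, y)`
  set G : (Esp m) × (Esp n) → (Esp n) := fun p => (toDual ℝ (Esp n)).symm (J (fderiv ℝ f p)) with hG
  -- partial derivative of a slice
  have hslice : ∀ x : (Esp m), ∀ y : (Esp n),
      HasFDerivAt (fun y' => f (x, y')) ((fderiv ℝ f (x, y)).comp (inr ℝ (Esp m) (Esp n))) y := by
    intro x y
    exact ((hfd (x, y)).hasFDerivAt).comp y (hasFDerivAt_prodMk_right x y)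
  have hGeq : ∀ x : (Esp m), ∀ y : (Esp n), gradient (fun y' => f (x, y')) y = G (x, y) := by
    intro x y
    simp only [gradient, hG]
    congr 1
    rw [(hslice x y).fderiv]
    rfl
  -- `G` is differentiable
  have hG1 : ContDiff ℝ 1 G := by
    have h1 : ContDiff ℝ 1 (fderiv ℝ f) := hf.fderiv_right (by norm_num)
    exact ((toDual ℝ (Esp n)).symm.toContinuousLinearEquiv :
      StrongDual ℝ (Esp n) ≃L[ℝ] (Esp n)).toContinuousLinearMap.contDiff.comp (J.contDiff.comp h1)
  have hGdiff : Differentiable ℝ G := hG1.differentiable one_ne_zero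
  set Dy := fderiv ℝ ystar x₀ with hDy
  set DG := fderiv ℝ G (x₀, y₀) with hDG
  -- chain rule for `x ↦ G (x, ystar x)`
  have h1 : HasFDerivAt (fun x => G (x, ystar x))
      (DG.comp ((ContinuousLinearMap.id ℝ (Esp m)).prod Dy)) x₀ :=
    HasFDerivAt.comp (g := G) x₀ (hGdiff (x₀, y₀)).hasFDerivAt ((hasFDerivAt_id (𝕜 := ℝ) x₀).prodMk hdiff.hasFDerivAt)
  have h2 : HasFDerivAt (fun x => G (x, ystar x)) (0 : (Esp m) →L[ℝ] (Esp n)) x₀ := by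
    refine HasFDerivAt.congr_of_eventuallyEq (hasFDerivAt_const (𝕜 := ℝ) (0 : EuclideanSpace ℝ (Fin n)) x₀) ?_
    filter_upwards [hcrit] with x hx
    rw [← hGeq x (ystar x), hx]
  have huniq : DG.comp ((ContinuousLinearMap.id ℝ (Esp m)).prod Dy) = 0 := h1.unique h2
  -- identify `C` and `H` with partial compositions of `DG`
  have hCeq : DG.comp (inl ℝ (Esp m) (Esp n)) = C := by
    rw [hC]
    have : HasFDerivAt (fun x => G (x, y₀)) (DG.comp (inl ℝ (Esp m) (Esp n))) x₀ :=
      HasFDerivAt.comp (g := G) x₀ (hGdiff (x₀, y₀)).hasFDerivAt (hasFDerivAt_prodMk_left (𝕜 := ℝ) x₀ y₀)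
    rw [show (fun x => gradient (fun y => f (x, y)) y₀) = fun x => G (x, y₀) from
      funext fun x => hGeq x y₀]
    exact (this.fderiv).symm
  have hHeq : DG.comp (inr ℝ (Esp m) (Esp n)) = H := by
    rw [hH]
    have : HasFDerivAt (fun y => G (x₀, y)) (DG.comp (inr ℝ (Esp m) (Esp n))) y₀ :=
      HasFDerivAt.comp (g := G) y₀ (hGdiff (x₀, y₀)).hasFDerivAt (hasFDerivAt_prodMk_right (𝕜 := ℝ) x₀ y₀)
    rw [show (fun y => gradient (fun y' => f (x₀, y')) y) = fun y => G (x₀, y) from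
      funext fun y => hGeq x₀ y]
    exact (this.fderiv).symm
  -- implicit differentiation: Dy = -(Hinv ∘ C)
  have hDyC : ∀ v : (Esp m), Dy v = -(Hinv (C v)) := by
    intro v
    have h0 : DG (v, Dy v) = 0 := by
      have := congrArg (fun L : (Esp m) →L[ℝ] (Esp n) => L v) huniq
      simpa using this
    have hsplit : C v + H (Dy v) = 0 := by
      rw [← hCeq, ← hHeq]
      have : ((v : (Esp m)), (0 : (Esp n))) + ((0 : (Esp m)), Dy v) = (v, Dy v) := by simp
      calc (DG.comp (inl ℝ (Esp m) (Esp n))) v + (DG.comp (inr ℝ (Esp m) (Esp n))) (Dy v)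
          = DG ((v, 0) + (0, Dy v)) := by rw [map_add]; rfl
        _ = 0 := by rw [this, h0]
    have hH' : H (Dy v) = -(C v) := eq_neg_of_add_eq_zero_right hsplit
    have hId : Hinv (H (Dy v)) = Dy v := congrArg (fun L : (Esp n) →L[ℝ] (Esp n) => L (Dy v)) hHinv₁
    rw [← hId, hH', map_neg]
  -- symmetry of the Hessian `H`
  have hHsym : ∀ a b : (Esp n), ⟪H a, b⟫_ℝ = ⟪a, H b⟫_ℝ := by
    set φ₀ : (Esp n) → ℝ := fun y => f (x₀, y) with hφ₀def
    have hφ₀ : ContDiff ℝ 2 φ₀ := hf.comp (contDiff_const.prodMk contDiff_id)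
    have hgrad : (fun y => gradient (fun y' => f (x₀, y')) y)
        = (⇑(toDual ℝ (Esp n)).symm) ∘ (fderiv ℝ φ₀) := by
      funext y
      simp only [gradient, Function.comp_apply]
      rfl
    have hHre : H = ((toDual ℝ (Esp n)).symm.toContinuousLinearEquiv.toContinuousLinearMap).comp
        (fderiv ℝ (fderiv ℝ φ₀) y₀) := by
      rw [hH, hgrad, LinearIsometryEquiv.comp_fderiv]
    have hsym := (hφ₀.contDiffAt (x := y₀)).isSymmSndFDerivAt (by simp)
    intro a b
    have ha : H a = (toDual ℝ (Esp n)).symm (fderiv ℝ (fderiv ℝ φ₀) y₀ a) := by rw [hHre]; rfl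
    have hb : H b = (toDual ℝ (Esp n)).symm (fderiv ℝ (fderiv ℝ φ₀) y₀ b) := by rw [hHre]; rfl
    calc ⟪H a, b⟫_ℝ = fderiv ℝ (fderiv ℝ φ₀) y₀ a b := by rw [ha, toDual_symm_apply]
      _ = fderiv ℝ (fderiv ℝ φ₀) y₀ b a := hsym a b
      _ = ⟪H b, a⟫_ℝ := by rw [hb, toDual_symm_apply]
      _ = ⟪a, H b⟫_ℝ := real_inner_comm _ _
  -- `Hinv` is self-adjoint
  have hHinvsym : ∀ a b : (Esp n), ⟪Hinv a, b⟫_ℝ = ⟪a, Hinv b⟫_ℝ := by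
    intro a b
    have h1 : H (Hinv b) = b := congrArg (fun L : (Esp n) →L[ℝ] (Esp n) => L b) hHinv₂
    have h2 : H (Hinv a) = a := congrArg (fun L : (Esp n) →L[ℝ] (Esp n) => L a) hHinv₂
    calc ⟪Hinv a, b⟫_ℝ = ⟪Hinv a, H (Hinv b)⟫_ℝ := by rw [h1]
      _ = ⟪H (Hinv a), Hinv b⟫_ℝ := (hHsym _ _).symm
      _ = ⟪a, Hinv b⟫_ℝ := by rw [h2]
  -- derivatives of the upper-level objective
  set DF := fderiv ℝ F (x₀, y₀) with hDF
  have hφ : HasFDerivAt (fun x => F (x, ystar x))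
      (DF.comp ((ContinuousLinearMap.id ℝ (Esp m)).prod Dy)) x₀ :=
    (hF (x₀, y₀)).hasFDerivAt.comp x₀ ((hasFDerivAt_id (𝕜 := ℝ) x₀).prodMk hdiff.hasFDerivAt)
  have hφx : HasFDerivAt (fun x => F (x, y₀)) (DF.comp (inl ℝ (Esp m) (Esp n))) x₀ :=
    (hF (x₀, y₀)).hasFDerivAt.comp x₀ (hasFDerivAt_prodMk_left (𝕜 := ℝ) x₀ y₀)
  have hφy : HasFDerivAt (fun y => F (x₀, y)) (DF.comp (inr ℝ (Esp m) (Esp n))) y₀ :=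
    (hF (x₀, y₀)).hasFDerivAt.comp y₀ (hasFDerivAt_prodMk_right (𝕜 := ℝ) x₀ y₀)
  have g1 : gradient (fun x => F (x, ystar x)) x₀
      = (toDual ℝ (Esp m)).symm (DF.comp ((ContinuousLinearMap.id ℝ (Esp m)).prod Dy)) := by
    rw [gradient, hφ.fderiv]
  have g2 : gradient (fun x => F (x, y₀)) x₀ = (toDual ℝ (Esp m)).symm (DF.comp (inl ℝ (Esp m) (Esp n))) := by
    rw [gradient, hφx.fderiv]
  have g3 : gradient (fun y => F (x₀, y)) y₀ = (toDual ℝ (Esp n)).symm (DF.comp (inr ℝ (Esp m) (Esp n))) := by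
    rw [gradient, hφy.fderiv]
  -- final computation via inner products
  apply ext_inner_right ℝ
  intro v
  rw [g1, toDual_symm_apply]
  rw [inner_sub_left, g2, toDual_symm_apply, adjoint_inner_left, g3]
  have hgy : ∀ w : (Esp n), ⟪(toDual ℝ (Esp n)).symm (DF.comp (inr ℝ (Esp m) (Esp n))), w⟫_ℝ
      = DF (0, w) := fun w => toDual_symm_apply
  calc DF.comp ((ContinuousLinearMap.id ℝ (Esp m)).prod Dy) v
      = DF ((v, 0) + (0, Dy v)) := by simp
    _ = DF (v, 0) + DF (0, Dy v) := map_add _ _ _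
    _ = DF (v, 0) - ⟪(toDual ℝ (Esp n)).symm (DF.comp (inr ℝ (Esp m) (Esp n))), Hinv (C v)⟫_ℝ := by
        rw [hgy, hDyC v]
        have hpn : ((0 : Esp m), -(Hinv (C v))) = -((0 : Esp m), Hinv (C v)) := by
          simp [Prod.ext_iff]
        rw [hpn, map_neg]; ring
    _ = DF.comp (inl ℝ (Esp m) (Esp n)) v
        - ⟪(toDual ℝ (Esp n)).symm (DF.comp (inr ℝ (Esp m) (Esp n))), Hinv (C v)⟫_ℝ := rfl
    _ = _ := by rw [hHinvsym]
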